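/- For every n ≥ 1, ord_3(D(P_n,-3)) = ⌈n/3⌉ if n ≡ 0 or 1 (mod 3), and ord_3(D(P_n,-3)) ∈ {⌈n/3⌉, ⌈n/3⌉+1} if n ≡ 2 (mod 3). -/

import Mathlib

open SimpleGraph Polynomial Finset

open Classical in
/-- The number of dominating sets of `G` of cardinality `i`. -/
noncomputable def domCount {V : Type*} [Fintype V] [DecidableEq V]
    (G : SimpleGraph V) (i : ℕ) : ℕ :=
  (Finset.univ.filter fun S : Finset V =>
    S.card = i ∧ ∀ v : V, v ∈ S ∨ ∃ u ∈ S, G.Adj u v).card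

/-- The domination polynomial of `G`. -/
noncomputable def domPoly {V : Type*} [Fintype V] [DecidableEq V]
    (G : SimpleGraph V) : Polynomial ℤ :=
  ∑ i ∈ Finset.range (Fintype.card V + 1), Polynomial.C (domCount G i : ℤ) * Polynomial.X ^ i

/-- The domination number of `G`. -/
noncomputable def domNum {V : Type*} [Fintype V] [DecidableEq V] (G : SimpleGraph V) : ℕ :=
  sInf {i | ∃ S : Finset V, S.card = i ∧ ∀ v : V, v ∈ S ∨ ∃ u ∈ S, G.Adj u v}

namespace Ord3Aux

/-- Transfer automaton for domination on a path, reading the membership string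
left to right. `p` = previous vertex still needs domination; `q` = previous char is 1. -/
def run : Bool → Bool → List Bool → Bool
  | p, _, [] => !p
  | p, q, b :: l => if b then run false true l else if p then false else run (!q) false l

/-- Weight of a subset-indicator. -/
def wt {n : ℕ} (f : Fin n → Bool) : ℤ := ∏ i, if f i then (-3) else 1

/-- Weighted count of strings accepted from state `(p, q)`. -/
noncomputable def wsum (n : ℕ) (p q : Bool) : ℤ :=
  ∑ f : Fin n → Bool, if run p q (List.ofFn f) then wt f else 0

/-- The vector recurrence. -/
def F : ℕ → ℤ × ℤ × ℤ
  | 0 => (1, 1, 0)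
  | n + 1 => (-3 * (F n).2.1 + (F n).2.2, (F n).1 - 3 * (F n).2.1, -3 * (F n).2.1)

lemma wsum_succ (n : ℕ) (p q : Bool) :
    wsum (n + 1) p q = -3 * wsum n false true + (if p then 0 else wsum n (!q) false) := by
  classical
  rw [wsum, Fintype.sum_equiv (Fin.consEquiv (fun _ => Bool)).symm
    _ (fun bf => if run p q (bf.1 :: List.ofFn bf.2) then (if bf.1 then (-3) else 1) * wt bf.2 else 0)]
  · rw [Fintype.sum_prod_type, Fintype.sum_bool]
    simp only [if_true, if_false]
    have h1 : ∀ l, run p q (true :: l) = run false true l := fun l => by simp [run]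
    have h2 : ∀ l, run p q (false :: l) = if p then false else run (!q) false l := fun l => by
      simp [run]
    simp only [h1, h2]
    have : (∑ f : Fin n → Bool, if run false true (List.ofFn f) then -3 * wt f else 0)
        = -3 * wsum n false true := by
      rw [wsum, Finset.mul_sum]
      exact Finset.sum_congr rfl fun f _ => by split <;> simp
    rw [this]
    congr 1
    cases p with
    | false =>
      simp only [Bool.false_eq_true, if_false, wsum, one_mul]
    | true =>
      simp
  · intro f
    rw [List.ofFn_succ]
    have hwt : wt f = (if f 0 then (-3:ℤ) else 1) * wt (fun i => f i.succ) := by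
      rw [wt, Fin.prod_univ_succ]; rfl
    have ht : Fin.tail f = fun i => f i.succ := rfl
    simp only [Fin.consEquiv, Equiv.coe_fn_symm_mk, ht]
    split <;> simp_all [hwt]

lemma wsum_eq (n : ℕ) :
    wsum n false false = (F n).1 ∧ wsum n false true = (F n).2.1 ∧
      wsum n true false = (F n).2.2 := by
  induction n with
  | zero =>
    refine ⟨?_, ?_, ?_⟩ <;>
      simp [wsum, F, run, wt, Finset.sum_ite_eq, Fintype.sum_unique] <;> rfl
  | succ n ih =>
    obtain ⟨h1, h2, h3⟩ := ih
    refine ⟨?_, ?_, ?_⟩ <;> simp [wsum_succ, F, h1, h2, h3] <;> ring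

lemma forall_lt_succ {P : ℕ → Prop} {n : ℕ} :
    (∀ i < n + 1, P i) ↔ P 0 ∧ ∀ i < n, P (i + 1) := by
  constructor
  · exact fun h => ⟨h 0 (by omega), fun i hi => h (i + 1) (by omega)⟩
  · rintro ⟨h0, h⟩ i hi
    cases i with
    | zero => exact h0
    | succ j => exact h j (by omega)

lemma getD_cons (b : Bool) (t : List Bool) (i : ℕ) :
    (b :: t).getD i false = if i = 0 then b else t.getD (i - 1) false := by
  cases i <;> simp

lemma run_spec (l : List Bool) : ∀ p q : Bool,
    run p q l = true ↔
      ((p = true → l.getD 0 false = true) ∧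
       ∀ i < l.length, l.getD i false = true ∨
         (if i = 0 then q else l.getD (i - 1) false) = true ∨
         l.getD (i + 1) false = true) := by
  induction l with
  | nil => intro p q; cases p <;> simp [run]
  | cons b t ih =>
    intro p q
    have hc := getD_cons b t
    cases b <;> cases p <;> cases q <;>
      simp only [run, List.length_cons, forall_lt_succ, ih, hc, if_true, if_false,
        Bool.false_eq_true, Bool.true_eq_false, Nat.succ_ne_zero, Nat.add_sub_cancel,
        if_neg (Nat.succ_ne_zero _)] <;>
      simp <;> tauto

lemma run_dom {n : ℕ} (S : Finset (Fin n)) :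
    run false false (List.ofFn fun i => decide (i ∈ S)) = true ↔
      ∀ v : Fin n, v ∈ S ∨ ∃ u ∈ S, (pathGraph n).Adj u v := by
  set l := List.ofFn fun i : Fin n => decide (i ∈ S) with hl
  have hlen : l.length = n := List.length_ofFn
  have hget : ∀ i (h : i < n), l.getD i false = decide ((⟨i, h⟩ : Fin n) ∈ S) := by
    intro i h
    rw [hl, List.getD_eq_getElem _ _ (by simp [h]), List.getElem_ofFn]
  have hget' : ∀ i, n ≤ i → l.getD i false = false := by
    intro i h
    exact List.getD_eq_default _ _ (by omega)
  rw [run_spec]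
  rw [hlen]
  constructor
  · rintro ⟨-, h⟩ v
    obtain ⟨i, hi⟩ := v
    rcases h i hi with hc | hc | hc
    · left
      rw [hget i hi] at hc
      exact of_decide_eq_true hc
    · right
      rcases Nat.eq_zero_or_pos i with h0 | h0
      · rw [if_pos h0] at hc; exact absurd hc (by simp)
      · rw [if_neg (by omega)] at hc
        have hlt : i - 1 < n := by omega
        rw [hget _ hlt] at hc
        exact ⟨⟨i - 1, hlt⟩, of_decide_eq_true hc, by rw [pathGraph_adj]; left; simp; omega⟩
    · right
      have hlt : i + 1 < n := by
        by_contra hle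
        rw [hget' _ (by omega)] at hc
        exact absurd hc (by simp)
      rw [hget _ hlt] at hc
      exact ⟨⟨i + 1, hlt⟩, of_decide_eq_true hc, by rw [pathGraph_adj]; right; simp⟩
  · intro h
    refine ⟨by simp, fun i hi => ?_⟩
    rcases h ⟨i, hi⟩ with hv | ⟨u, hu, hadj⟩
    · left; rw [hget i hi]; exact decide_eq_true hv
    · rw [pathGraph_adj] at hadj
      rcases hadj with h1 | h2
      · right; left
        have h0 : i ≠ 0 := by simp at h1; omega
        rw [if_neg h0]
        have hlt : i - 1 < n := by omega
        rw [hget _ hlt]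
        have : (⟨i - 1, hlt⟩ : Fin n) = u := Fin.ext (by simp at h1 ⊢; omega)
        rw [this]; exact decide_eq_true hu
      · right; right
        have hlt : i + 1 < n := by have := u.isLt; simp at h2; omega
        rw [hget _ hlt]
        have : (⟨i + 1, hlt⟩ : Fin n) = u := Fin.ext (by simp at h2 ⊢; omega)
        rw [this]; exact decide_eq_true hu

open Classical in
lemma sum_dom_eq (n : ℕ) :
    ∑ S ∈ Finset.univ.filter
        (fun S : Finset (Fin n) => ∀ v, v ∈ S ∨ ∃ u ∈ S, (pathGraph n).Adj u v),
      (-3 : ℤ) ^ S.card = (F n).1 := by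
  classical
  rw [← (wsum_eq n).1, wsum, Finset.sum_filter]
  refine Fintype.sum_equiv ⟨fun S : Finset (Fin n) => fun i => decide (i ∈ S),
      fun f => Finset.univ.filter (fun i => f i = true), ?_, ?_⟩ _ _ ?_
  · intro S; ext i; simp
  · intro f; funext i; simp
  · intro S
    simp only [Equiv.coe_fn_mk]
    have hwt : wt (fun i => decide (i ∈ S)) = (-3 : ℤ) ^ S.card := by
      rw [wt]
      have h1 : ∀ i : Fin n, (if decide (i ∈ S) then (-3 : ℤ) else 1)
          = (if i ∈ S then -3 else 1) := by intro i; simp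
      rw [Finset.prod_congr rfl fun i _ => h1 i, Finset.prod_ite_mem, Finset.univ_inter,
        Finset.prod_const]
    rw [hwt]
    by_cases hS : ∀ v : Fin n, v ∈ S ∨ ∃ u ∈ S, (pathGraph n).Adj u v
    · rw [if_pos hS, if_pos ((run_dom S).mpr hS)]
    · rw [if_neg hS, if_neg fun hc => hS ((run_dom S).mp hc)]

open Classical in
lemma eval_domPoly (n : ℕ) :
    (domPoly (pathGraph n)).eval (-3) =
      ∑ S ∈ Finset.univ.filter
        (fun S : Finset (Fin n) => ∀ v, v ∈ S ∨ ∃ u ∈ S, (pathGraph n).Adj u v),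
      (-3 : ℤ) ^ S.card := by
  classical
  rw [domPoly, Polynomial.eval_finset_sum]
  simp only [Polynomial.eval_mul, Polynomial.eval_C, Polynomial.eval_pow, Polynomial.eval_X]
  rw [← Finset.sum_fiberwise_of_maps_to (g := Finset.card)
      (t := Finset.range (Fintype.card (Fin n) + 1))
      (fun S hS => by
        simp only [Finset.mem_range, Nat.lt_succ_iff]
        exact le_trans (Finset.card_le_univ S) (le_of_eq Finset.card_univ))
      (fun S => (-3 : ℤ) ^ S.card)]
  refine Finset.sum_congr rfl fun i hi => ?_
  rw [Finset.filter_filter]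
  have hcongr : ∀ S ∈ Finset.univ.filter
      (fun S : Finset (Fin n) =>
        (∀ v, v ∈ S ∨ ∃ u ∈ S, (pathGraph n).Adj u v) ∧ S.card = i),
      (-3 : ℤ) ^ S.card = (-3) ^ i := by
    intro S hS
    rw [Finset.mem_filter] at hS
    rw [hS.2.2]
  rw [Finset.sum_congr rfl hcongr, Finset.sum_const, nsmul_eq_mul]
  have hcard : domCount (pathGraph n) i = (Finset.univ.filter
      (fun S : Finset (Fin n) =>
        (∀ v, v ∈ S ∨ ∃ u ∈ S, (pathGraph n).Adj u v) ∧ S.card = i)).card := by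
    rw [domCount]
    congr 1
    ext S
    simp [and_comm]
  rw [hcard]

/-- The invariant set of residue triples mod 9. -/
def okSet : Finset (ZMod 9 × ZMod 9 × ZMod 9) :=
  {(8, 7, 8), (1, 5, 2), (4, 7, 0), (1, 5, 7), (8, 1, 4), (2, 5, 0), (8, 1, 5), (1, 2, 8),
   (1, 1, 0), (1, 2, 1), (8, 4, 7), (5, 2, 0), (8, 4, 2), (1, 8, 5), (7, 4, 0), (1, 8, 4),
   (8, 7, 1), (8, 8, 0)}

lemma F_step (m : ℕ) : F (m + 1) =
    (-3 * (F m).2.1 + (F m).2.2, (F m).1 - 3 * (F m).2.1, -3 * (F m).2.1) := rfl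

lemma okSet_step : ∀ a b c : ZMod 9, (a, b, c) ∈ okSet →
    (2 * a - b - c, 6 * a - 4 * b - 3 * c, 3 * a - 2 * b - c) ∈ okSet := by decide

lemma key : ∀ k : ℕ, ∃ x y z : ℤ,
    F (3 * k + 1) = (3 ^ (k + 1) * x, 3 ^ k * y, 3 ^ (k + 1) * z) ∧
      ((x : ZMod 9), (y : ZMod 9), (z : ZMod 9)) ∈ okSet := by
  intro k
  induction k with
  | zero =>
    refine ⟨-1, -2, -1, ?_, by decide⟩
    norm_num [F]
  | succ k ih =>
    obtain ⟨x, y, z, hF, hm⟩ := ih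
    refine ⟨2 * x - y - z, 6 * x - 4 * y - 3 * z, 3 * x - 2 * y - z, ?_, ?_⟩
    · have : 3 * (k + 1) + 1 = 3 * k + 1 + 1 + 1 + 1 := by ring
      rw [this, F_step (3 * k + 1 + 1 + 1), F_step (3 * k + 1 + 1), F_step (3 * k + 1), hF]
      dsimp only
      simp only [Prod.mk.injEq]
      refine ⟨by ring, by ring, by ring⟩
    · have := okSet_step (x : ZMod 9) (y : ZMod 9) (z : ZMod 9) hm
      convert this using 2 <;> push_cast <;> ring

set_option maxRecDepth 40000 in
lemma okSet_fst_ne : ∀ t ∈ okSet,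
    (ZMod.castHom (by norm_num : (3:ℕ) ∣ 9) (ZMod 3)) t.1 ≠ 0 := by decide

set_option maxRecDepth 40000 in
lemma okSet_snd_ne : ∀ t ∈ okSet,
    (ZMod.castHom (by norm_num : (3:ℕ) ∣ 9) (ZMod 3)) t.2.1 ≠ 0 := by decide

set_option maxRecDepth 40000 in
lemma okSet_sub_ne : ∀ t ∈ okSet, t.2.2 - t.2.1 ≠ (0 : ZMod 9) := by decide

lemma not_dvd_of_cast {x : ℤ} (h : (ZMod.castHom (by norm_num : (3:ℕ) ∣ 9) (ZMod 3))
    ((x : ZMod 9)) ≠ 0) : ¬(3 : ℤ) ∣ x := by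
  intro hd
  apply h
  rw [map_intCast]
  exact_mod_cast (ZMod.intCast_zmod_eq_zero_iff_dvd x 3).mpr (by exact_mod_cast hd)

lemma val_pow_mul (e : ℕ) (u : ℤ) (hu : ¬(3 : ℤ) ∣ u) :
    padicValInt 3 (3 ^ e * u) = e := by
  haveI : Fact (Nat.Prime 3) := ⟨by norm_num⟩
  have hu0 : u ≠ 0 := by rintro rfl; exact hu (dvd_zero _)
  rw [padicValInt.mul (by positivity) hu0]
  have h1 : padicValInt 3 ((3 : ℤ) ^ e) = e := by
    have h2 : ((3 : ℤ)) ^ e = ((3 ^ e : ℕ) : ℤ) := by push_cast; ring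
    rw [h2, padicValInt.of_nat, padicValNat.prime_pow]
  rw [h1, padicValInt.eq_zero_of_not_dvd (by exact_mod_cast hu)]
  omega

end Ord3Aux

open Ord3Aux in
theorem ord3_domPoly_path_neg_three (n : ℕ) (hn : 1 ≤ n) :
    (n % 3 = 0 ∨ n % 3 = 1 →
        padicValInt 3 ((domPoly (pathGraph n)).eval (-3)) = (n + 2) / 3) ∧
    (n % 3 = 2 →
        padicValInt 3 ((domPoly (pathGraph n)).eval (-3)) = (n + 2) / 3 ∨
        padicValInt 3 ((domPoly (pathGraph n)).eval (-3)) = (n + 2) / 3 + 1) := by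
  classical
  have hmain : (domPoly (pathGraph n)).eval (-3) = (F n).1 :=
    (eval_domPoly n).trans (sum_dom_eq n)
  set k := (n - 1) / 3 with hk
  obtain ⟨x, y, z, hF, hm⟩ := key k
  have hx : ¬(3 : ℤ) ∣ x := not_dvd_of_cast (okSet_fst_ne _ hm)
  have hy : ¬(3 : ℤ) ∣ y := not_dvd_of_cast (okSet_snd_ne _ hm)
  have hzy : ¬(9 : ℤ) ∣ (z - y) := by
    intro hd
    apply okSet_sub_ne _ hm
    have : ((z - y : ℤ) : ZMod 9) = 0 :=
      (ZMod.intCast_zmod_eq_zero_iff_dvd (z - y) 9).mpr (by exact_mod_cast hd)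
    push_cast at this
    simpa using this
  have hcase : n = 3 * k + 1 ∨ n = 3 * k + 2 ∨ n = 3 * k + 3 := by omega
  rcases hcase with hc | hc | hc
  · -- n ≡ 1 mod 3
    have hval : (F n).1 = 3 ^ (k + 1) * x := by rw [hc, hF]
    constructor
    · intro _
      rw [hmain, hval, val_pow_mul _ _ hx]
      omega
    · intro h2; omega
  · -- n ≡ 2 mod 3
    have hval : (F n).1 = 3 ^ (k + 1) * (z - y) := by
      rw [hc, show 3 * k + 2 = 3 * k + 1 + 1 from rfl, F_step, hF]
      dsimp only
      ring
    constructor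
    · intro h01; omega
    · intro _
      by_cases h3 : (3 : ℤ) ∣ (z - y)
      · right
        obtain ⟨w, hw⟩ := h3
        have hw3 : ¬(3 : ℤ) ∣ w := by intro hd; apply hzy; omega
        have : (F n).1 = 3 ^ (k + 2) * w := by rw [hval, hw]; ring
        rw [hmain, this, val_pow_mul _ _ hw3]
        omega
      · left
        rw [hmain, hval, val_pow_mul _ _ h3]
        omega
  · -- n ≡ 0 mod 3
    have hval : (F n).1 = 3 ^ (k + 1) * (2 * y - 3 * x) := by
      rw [hc, show 3 * k + 3 = 3 * k + 1 + 1 + 1 from rfl, F_step (3 * k + 1 + 1),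
        F_step (3 * k + 1), hF]
      dsimp only
      ring
    have h3 : ¬(3 : ℤ) ∣ (2 * y - 3 * x) := by intro hd; apply hy; omega
    constructor
    · intro _
      rw [hmain, hval, val_pow_mul _ _ h3]
      omega
    · intro h2; omega
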